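/- Let (S, ρ) be a separable metric space with Borel probability measure μ of Vitali type with respect to ρ. Let X₁, X₂, ... ~ μ i.i.d. and R₁, R₂, ... ~ ν i.i.d., independent of the X's, where ν is a distribution on [0,∞) with ν((0,ε)) > 0 for every ε > 0. Let Fₙ = σ(B_{R₁}(X₁),...,B_{Rₙ}(Xₙ)). Then almost surely ⋁ₙ Fₙ and the Borel σ-field of S differ only by μ-null sets. -/

import Mathlib

open MeasureTheory ProbabilityTheory

lemma symmDiff_iUnion_null' {α ι : Type*} [Countable ι] [MeasurableSpace α] (μ : Measure α)
    {A B : ι → Set α} (h : ∀ i, μ (symmDiff (A i) (B i)) = 0) :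
    μ (symmDiff (⋃ i, A i) (⋃ i, B i)) = 0 := by
  refine measure_mono_null ?_ (measure_iUnion_null h)
  intro x hx
  rw [Set.mem_symmDiff] at hx
  rcases hx with ⟨hA, hB⟩ | ⟨hB, hA⟩
  · obtain ⟨i, hi⟩ := Set.mem_iUnion.1 hA
    exact Set.mem_iUnion.2 ⟨i, Set.mem_symmDiff.2 (Or.inl
      ⟨hi, fun hBi => hB (Set.mem_iUnion.2 ⟨i, hBi⟩)⟩)⟩
  · obtain ⟨i, hi⟩ := Set.mem_iUnion.1 hB
    exact Set.mem_iUnion.2 ⟨i, Set.mem_symmDiff.2 (Or.inr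
      ⟨hi, fun hAi => hA (Set.mem_iUnion.2 ⟨i, hAi⟩)⟩)⟩

lemma ae_ball_pos' {S : Type*} [MetricSpace S] [TopologicalSpace.SeparableSpace S]
    [MeasurableSpace S] [OpensMeasurableSpace S] (μ : Measure S) :
    ∀ᵐ x ∂μ, ∀ t > 0, μ (Metric.ball x t) ≠ 0 := by
  obtain ⟨D, Dct, Ddense⟩ := TopologicalSpace.exists_countable_dense S
  haveI : Countable D := Dct.to_subtype
  have hK : μ (⋃ (d : D) (q : ℚ) (_ : μ (Metric.ball (d : S) (q : ℝ)) = 0),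
      Metric.ball (d : S) (q : ℝ)) = 0 :=
    measure_iUnion_null fun d => measure_iUnion_null fun q => measure_iUnion_null fun h => h
  rw [ae_iff]
  refine measure_mono_null ?_ hK
  intro x hx
  simp only [Set.mem_setOf_eq] at hx
  push_neg at hx
  obtain ⟨t, ht, h0⟩ := hx
  obtain ⟨q, hq0, hqt⟩ := exists_rat_btwn (by linarith : (0:ℝ) < t/3)
  obtain ⟨y, hyb, hyD⟩ := Metric.dense_iff.1 Ddense x q (by exact_mod_cast hq0)
  have hsub : Metric.ball y ((2*q : ℚ) : ℝ) ⊆ Metric.ball x t := by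
    intro z hz
    rw [Metric.mem_ball] at hz hyb ⊢
    push_cast at hz
    calc dist z x ≤ dist z y + dist y x := dist_triangle _ _ _
      _ < 2*q + q := by linarith
      _ < t := by push_cast at hqt ⊢; linarith
  refine Set.mem_iUnion.2 ⟨⟨y, hyD⟩, Set.mem_iUnion.2 ⟨2*q, Set.mem_iUnion.2
    ⟨measure_mono_null hsub h0, ?_⟩⟩⟩
  rw [Metric.mem_ball, dist_comm]
  rw [Metric.mem_ball] at hyb
  push_cast
  linarith

lemma open_eq_iUnion_balls' {S : Type*} [MetricSpace S] {D : Set S} (hD : Dense D)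
    {U : Set S} (hU : IsOpen U) :
    U = ⋃ (p : D × ℚ) (_ : 0 < ((p.2 : ℝ)) ∧ Metric.ball (p.1 : S) (p.2 : ℝ) ⊆ U),
      Metric.ball (p.1 : S) (p.2 : ℝ) := by
  apply Set.Subset.antisymm
  · intro x hx
    obtain ⟨ε, hε, hball⟩ := Metric.isOpen_iff.1 hU x hx
    obtain ⟨q, hq0, hqε⟩ := exists_rat_btwn (by linarith : (0:ℝ) < ε/2)
    obtain ⟨y, hyb, hyD⟩ := Metric.dense_iff.1 hD x q (by exact_mod_cast hq0)
    rw [Metric.mem_ball] at hyb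
    have hcond : 0 < ((q : ℝ)) ∧ Metric.ball y (q : ℝ) ⊆ U := by
      refine ⟨by exact_mod_cast hq0, fun z hz => hball ?_⟩
      rw [Metric.mem_ball] at hz ⊢
      calc dist z x ≤ dist z y + dist y x := dist_triangle _ _ _
        _ < q + q := by linarith
        _ < ε := by linarith
    refine Set.mem_iUnion.2 ⟨(⟨y, hyD⟩, q), Set.mem_iUnion.2 ⟨hcond, ?_⟩⟩
    rw [Metric.mem_ball, dist_comm]
    exact hyb
  · exact Set.iUnion_subset fun p => Set.iUnion_subset fun h => h.2

lemma key_ball {S : Type*} [MetricSpace S] [TopologicalSpace.SeparableSpace S]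
    [MeasurableSpace S] [BorelSpace S]
    (μ : Measure S) [IsProbabilityMeasure μ]
    (ν : Measure ℝ) [IsProbabilityMeasure ν]
    (hνpos : ∀ ε > 0, 0 < ν (Set.Ioo 0 ε))
    {Ω : Type*} [MeasurableSpace Ω] (P : Measure Ω) [IsProbabilityMeasure P]
    (X : ℕ → Ω → S) (R : ℕ → Ω → ℝ)
    (hXmeas : ∀ n, Measurable (X n)) (hRmeas : ∀ n, Measurable (R n))
    (hdist : ∀ n, Measure.map (fun ω => (X n ω, R n ω)) P = μ.prod ν)
    (hindep : iIndepFun (fun n ω => (X n ω, R n ω)) P)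
    (c : S) (q : ℝ) (hq : 0 < q) :
    ∀ᵐ ω ∂P, μ (Metric.ball c q \
      ⋃ n, ⋃ (_ : dist (X n ω) c + R n ω ≤ q), Metric.ball (X n ω) (R n ω)) = 0 := by
  haveI : SecondCountableTopology S := UniformSpace.secondCountable_of_separable S
  set A : Ω → Set S := fun ω =>
    ⋃ n, ⋃ (_ : dist (X n ω) c + R n ω ≤ q), Metric.ball (X n ω) (R n ω) with hA
  set W : Set (Ω × S) := {p : Ω × S | p.2 ∈ Metric.ball c q ∧ p.2 ∉ A p.1} with hWdef
  have hW : MeasurableSet W := by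
    have h2 : MeasurableSet {p : Ω × S | p.2 ∈ A p.1} := by
      have heq : {p : Ω × S | p.2 ∈ A p.1} = ⋃ n, ({p : Ω × S | dist (X n p.1) c + R n p.1 ≤ q}
          ∩ {p : Ω × S | dist p.2 (X n p.1) < R n p.1}) := by
        ext p
        simp [hA, Set.mem_iUnion, Metric.mem_ball]
      rw [heq]
      refine MeasurableSet.iUnion fun n => MeasurableSet.inter ?_ ?_
      · exact measurableSet_le ((((hXmeas n).comp measurable_fst).dist measurable_const).add
          ((hRmeas n).comp measurable_fst)) measurable_const
      · exact measurableSet_lt (measurable_snd.dist ((hXmeas n).comp measurable_fst))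
          ((hRmeas n).comp measurable_fst)
    exact (measurable_snd measurableSet_ball).inter h2.compl
  -- slice probability is zero at good points
  have hslice : ∀ x : S, (∀ t > 0, μ (Metric.ball x t) ≠ 0) →
      P {ω | x ∈ Metric.ball c q ∧ x ∉ A ω} = 0 := by
    intro x hx
    by_cases hxb : x ∈ Metric.ball c q
    · set T : Set (S × ℝ) := {p : S × ℝ | dist x p.1 < p.2 ∧ dist p.1 c + p.2 ≤ q} with hT
      have hTmeas : MeasurableSet T := by
        rw [hT, Set.setOf_and]
        exact (measurableSet_lt (measurable_const.dist measurable_fst) measurable_snd).inter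
          (measurableSet_le ((measurable_fst.dist measurable_const).add measurable_snd)
            measurable_const)
      set E : ℕ → Set Ω := fun n => (fun ω => (X n ω, R n ω)) ⁻¹' T with hE
      have hmeasn : ∀ n, Measurable fun ω => (X n ω, R n ω) :=
        fun n => (hXmeas n).prodMk (hRmeas n)
      have hEmeas : ∀ n, MeasurableSet (E n) := fun n => (hmeasn n) hTmeas
      have hEP : ∀ n, P (E n) = (μ.prod ν) T := by
        intro n
        rw [hE, ← Measure.map_apply (hmeasn n) hTmeas, hdist n]
      -- positivity of (μ.prod ν) T
      have hxc : dist x c < q := Metric.mem_ball.1 hxb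
      set δ : ℝ := (q - dist x c) / 3 with hδ
      have hδpos : 0 < δ := by rw [hδ]; linarith
      have hν0 : ν (Set.Ioo 0 δ) ≠ 0 := (hνpos δ hδpos).ne'
      obtain ⟨k, hk⟩ : ∃ k : ℕ, ν (Set.Ioo (δ / ((k : ℝ) + 2)) δ) ≠ 0 := by
        by_contra hcon
        push_neg at hcon
        refine hν0 (measure_mono_null ?_ (measure_iUnion_null hcon))
        intro r hr
        obtain ⟨k, hk⟩ := exists_nat_gt (δ / r)
        refine Set.mem_iUnion.2 ⟨k, ?_, hr.2⟩
        rw [div_lt_iff₀ (by positivity)]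
        have h1 : δ < r * (k : ℝ) := by
          have := (div_lt_iff₀ hr.1).1 hk
          linarith
        nlinarith [hr.1]
      set δ' : ℝ := δ / ((k : ℝ) + 2) with hδ'
      have hδ'pos : 0 < δ' := by rw [hδ']; positivity
      have hδ'lt : δ' < δ := by
        rw [hδ']
        exact div_lt_self hδpos (by have : (0:ℝ) ≤ (k:ℝ) := Nat.cast_nonneg k; linarith)
      have hsub : Metric.ball x δ' ×ˢ Set.Ioo δ' δ ⊆ T := by
        rintro ⟨y, r⟩ ⟨hy, hr⟩
        have hyx : dist y x < δ' := Metric.mem_ball.1 hy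
        have hxy : dist x y < δ' := by rw [dist_comm]; exact hyx
        refine ⟨lt_trans hxy hr.1, ?_⟩
        have htri : dist y c ≤ dist y x + dist x c := dist_triangle _ _ _
        have h3 : 3 * δ = q - dist x c := by rw [hδ]; ring
        have := hr.2
        simp only [Set.mem_Ioo] at hr
        linarith [hr.1, hr.2]
      have hTpos : (μ.prod ν) T ≠ 0 := by
        refine (lt_of_lt_of_le ?_ (measure_mono hsub)).ne'
        rw [Measure.prod_prod]
        exact ENNReal.mul_pos (hx δ' hδ'pos) hk
      -- independence of the events E n
      have hindepE : iIndepSet E P := by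
        rw [iIndepSet_iff_meas_biInter hEmeas]
        intro s
        have := hindep.measure_inter_preimage_eq_mul s (sets := fun _ => T)
          (fun i _ => hTmeas)
        exact this
      have hsum : (∑' n, P (E n)) = ⊤ := by
        simp only [hEP]
        exact ENNReal.tsum_const_eq_top_of_ne_zero hTpos
      have hlim : P (Filter.limsup E Filter.atTop) = 1 :=
        measure_limsup_eq_one hEmeas hindepE hsum
      have hUnion : P (⋃ n, E n) = 1 := by
        refine le_antisymm prob_le_one ?_
        rw [← hlim]
        refine measure_mono ?_
        rw [Filter.limsup_eq_iInf_iSup_of_nat]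
        exact le_trans (Set.iInter_subset _ 0) (by simp)
      have hcompl : P ((⋃ n, E n)ᶜ) = 0 := by
        rw [measure_compl (MeasurableSet.iUnion hEmeas) (measure_ne_top _ _), hUnion,
          measure_univ, tsub_self]
      refine measure_mono_null ?_ hcompl
      intro ω hω
      simp only [Set.mem_setOf_eq] at hω
      simp only [Set.mem_compl_iff, Set.mem_iUnion, not_exists]
      intro n hn
      refine hω.2 ?_
      rw [hA]
      simp only [Set.mem_iUnion]
      obtain ⟨h1, h2⟩ := hn
      exact ⟨n, h2, Metric.mem_ball.2 h1⟩
    · have heq : {ω | x ∈ Metric.ball c q ∧ x ∉ A ω} = ∅ := by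
        ext ω; simp [hxb]
      rw [heq, measure_empty]
  -- Fubini argument
  have hgood : ∀ᵐ x ∂μ, ∀ t > 0, μ (Metric.ball x t) ≠ 0 := ae_ball_pos' μ
  have hprod0 : (P.prod μ) W = 0 := by
    rw [Measure.prod_apply_symm hW]
    have hae0 : (fun x => P ((fun ω => (ω, x)) ⁻¹' W)) =ᵐ[μ] (fun _ => 0) := by
      filter_upwards [hgood] with x hx
      have : ((fun ω => (ω, x)) ⁻¹' W) = {ω | x ∈ Metric.ball c q ∧ x ∉ A ω} := rfl
      rw [this]
      exact hslice x hx
    rw [lintegral_congr_ae hae0, lintegral_zero]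
  have hae : ∀ᵐ ω ∂P, μ (Prod.mk ω ⁻¹' W) = 0 := by
    have hmeasfun : Measurable fun ω => μ (Prod.mk ω ⁻¹' W) :=
      measurable_measure_prodMk_left hW
    have h0 : ∫⁻ ω, μ (Prod.mk ω ⁻¹' W) ∂P = 0 := by
      rw [← Measure.prod_apply hW, hprod0]
    exact (lintegral_eq_zero_iff hmeasfun).1 h0
  filter_upwards [hae] with ω hω
  have : Prod.mk ω ⁻¹' W = Metric.ball c q \ A ω := rfl
  rw [this] at hω
  exact hω

/-- A measure `μ` on a metric space is of Vitali type if from every fine cover of a set `A`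
by balls one can extract a countable disjoint subfamily covering `A` up to a `μ`-null set. -/
def VitaliType {S : Type*} [MetricSpace S] [MeasurableSpace S] (μ : Measure S) : Prop :=
  ∀ (A : Set S) (C : Set (S × ℝ)),
    (∀ x ∈ A, ∀ ε > 0, ∃ r, 0 < r ∧ r < ε ∧ (x, r) ∈ C) →
    ∃ D ⊆ C, D.Countable ∧
      D.PairwiseDisjoint (fun p => Metric.ball p.1 p.2) ∧
      μ (A \ ⋃ p ∈ D, Metric.ball p.1 p.2) = 0

/-- Monotone-convergence law of large numbers in a separable metric space: sampling iid balls
with random centers `Xₙ ~ μ` and random radii `Rₙ ~ ν`, the join of the empirical σ-fields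
almost surely differs from the Borel σ-field only by `μ`-null sets. -/
theorem empirical_ball_sigma_fields_recover_borel
    {S : Type*} [MetricSpace S] [TopologicalSpace.SeparableSpace S] [MeasurableSpace S] [BorelSpace S]
    (μ : Measure S) [IsProbabilityMeasure μ] (hμ : VitaliType μ)
    (ν : Measure ℝ) [IsProbabilityMeasure ν] (hν : ν (Set.Iio 0) = 0)
    (hνpos : ∀ ε > 0, 0 < ν (Set.Ioo 0 ε))
    {Ω : Type*} [MeasurableSpace Ω] (P : Measure Ω) [IsProbabilityMeasure P]
    (X : ℕ → Ω → S) (R : ℕ → Ω → ℝ)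
    (hXmeas : ∀ n, Measurable (X n)) (hRmeas : ∀ n, Measurable (R n))
    (hdist : ∀ n, Measure.map (fun ω => (X n ω, R n ω)) P = μ.prod ν)
    (hindep : iIndepFun (fun n ω => (X n ω, R n ω)) P) :
    ∀ᵐ ω ∂P,
      (∀ A, MeasurableSet[⨆ n, MeasurableSpace.generateFrom
            {s | ∃ j < n, s = Metric.ball (X j ω) (R j ω)}] A →
        ∃ B, MeasurableSet B ∧ μ (symmDiff A B) = 0) ∧
      (∀ B, MeasurableSet B →
        ∃ A, MeasurableSet[⨆ n, MeasurableSpace.generateFrom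
            {s | ∃ j < n, s = Metric.ball (X j ω) (R j ω)}] A ∧ μ (symmDiff A B) = 0) := by
  classical
  set G : Ω → MeasurableSpace S := fun ω => ⨆ n, MeasurableSpace.generateFrom
      {s | ∃ j < n, s = Metric.ball (X j ω) (R j ω)} with hG
  obtain ⟨D, Dct, Ddense⟩ := TopologicalSpace.exists_countable_dense S
  haveI : Countable D := Dct.to_subtype
  have hGle : ∀ ω, G ω ≤ (inferInstance : MeasurableSpace S) := by
    intro ω
    refine iSup_le fun n => MeasurableSpace.generateFrom_le fun t ht => ?_
    obtain ⟨j, -, rfl⟩ := ht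
    exact measurableSet_ball
  -- key: a.s. each ball is approximated
  have key : ∀ (c : S) (q : ℝ), 0 < q → ∀ᵐ ω ∂P,
      ∃ A, MeasurableSet[G ω] A ∧ μ (symmDiff A (Metric.ball c q)) = 0 := by
    intro c q hq
    filter_upwards [key_ball μ ν hνpos P X R hXmeas hRmeas hdist hindep c q hq] with ω hω
    set A : Set S := ⋃ n, ⋃ (_ : dist (X n ω) c + R n ω ≤ q), Metric.ball (X n ω) (R n ω)
      with hAdef
    have hAmeas : MeasurableSet[G ω] A := by
      refine MeasurableSet.iUnion fun n => MeasurableSet.iUnion fun _ => ?_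
      have hle : MeasurableSpace.generateFrom
          {s | ∃ j < n + 1, s = Metric.ball (X j ω) (R j ω)} ≤ G ω :=
        le_iSup (fun m => MeasurableSpace.generateFrom
          {s | ∃ j < m, s = Metric.ball (X j ω) (R j ω)}) (n + 1)
      exact hle _ (MeasurableSpace.measurableSet_generateFrom ⟨n, Nat.lt_succ_self n, rfl⟩)
    have hAsub : A ⊆ Metric.ball c q := by
      intro x hx
      simp only [hAdef, Set.mem_iUnion] at hx
      obtain ⟨n, hcond, hxball⟩ := hx
      rw [Metric.mem_ball] at hxball ⊢
      calc dist x c ≤ dist x (X n ω) + dist (X n ω) c := dist_triangle _ _ _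
        _ < R n ω + dist (X n ω) c := by linarith
        _ ≤ q := by linarith
    refine ⟨A, hAmeas, ?_⟩
    rw [Set.symmDiff_def]
    refine measure_union_null ?_ hω
    rw [Set.diff_eq_empty.2 hAsub]
    exact measure_empty
  have hae2 : ∀ᵐ ω ∂P, ∀ (d : D) (q : ℚ), 0 < ((q : ℝ)) →
      ∃ A, MeasurableSet[G ω] A ∧ μ (symmDiff A (Metric.ball (d : S) (q : ℝ))) = 0 := by
    rw [ae_all_iff]
    intro d
    rw [ae_all_iff]
    intro q
    by_cases hq : 0 < ((q : ℝ))
    · filter_upwards [key (d : S) (q : ℝ) hq] with ω h _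
      exact h
    · exact Filter.Eventually.of_forall fun ω h => absurd h hq
  filter_upwards [hae2] with ω hω
  constructor
  · intro A hA
    exact ⟨A, hGle ω A hA, by simp [symmDiff_self]⟩
  · intro B hB
    refine MeasurableSet.induction_on_open
        (C := fun B _ => ∃ A, MeasurableSet[G ω] A ∧ μ (symmDiff A B) = 0) ?_ ?_ ?_ _ hB
    · -- open sets
      intro U hU
      rw [open_eq_iUnion_balls' Ddense hU]
      have hch : ∀ p : D × ℚ,
          ∃ A, MeasurableSet[G ω] A ∧ (0 < ((p.2 : ℝ)) ∧ Metric.ball (p.1 : S) (p.2 : ℝ) ⊆ U →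
            μ (symmDiff A (Metric.ball (p.1 : S) (p.2 : ℝ))) = 0) := by
        intro p
        by_cases hc : 0 < ((p.2 : ℝ)) ∧ Metric.ball (p.1 : S) (p.2 : ℝ) ⊆ U
        · obtain ⟨A, hA1, hA2⟩ := hω p.1 p.2 hc.1
          exact ⟨A, hA1, fun _ => hA2⟩
        · exact ⟨∅, @MeasurableSet.empty _ (G ω), fun h => absurd h hc⟩
      choose Ap hAp1 hAp2 using hch
      refine ⟨⋃ (p : D × ℚ) (_ : 0 < ((p.2 : ℝ)) ∧ Metric.ball (p.1 : S) (p.2 : ℝ) ⊆ U), Ap p,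
        ?_, ?_⟩
      · exact MeasurableSet.iUnion fun p => MeasurableSet.iUnion fun _ => hAp1 p
      · refine symmDiff_iUnion_null' μ fun p => ?_
        by_cases hc : 0 < ((p.2 : ℝ)) ∧ Metric.ball (p.1 : S) (p.2 : ℝ) ⊆ U
        · simp only [Set.iUnion_eq_if, if_pos hc]
          exact hAp2 p hc
        · simp only [Set.iUnion_eq_if, if_neg hc]
          simp [symmDiff_self]
    · -- complements
      rintro t _ ⟨A, hA, h0⟩
      exact ⟨Aᶜ, hA.compl, by rwa [compl_symmDiff_compl]⟩
    · -- countable unions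
      intro g _ _ hg
      choose Ag hAg h0 using hg
      exact ⟨⋃ i, Ag i, MeasurableSet.iUnion hAg, symmDiff_iUnion_null' μ h0⟩
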